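/- Let α, β, k, β₁, k_θ > 0, let 𝒢 ∈ ℝ^{p×p} be constant symmetric and Q ∈ ℝ^{p×n} constant. Let p̃, r, η : ℝ → ℝⁿ be differentiable with p̃' = q̃ where q̃ ≜ r − αp̃ − η, η' = −βη − kr − αq̃, and r'(t) = −k r(t) + φ(t) − α² p̃(t) + (k+α) η(t) for a continuous φ : ℝ → ℝⁿ. Let Γ : ℝ → ℝ^{p×p} be differentiable, symmetric- and invertible-valued, with Γ' = β₁Γ − k_θΓ𝒢Γ, and let θ̃ : ℝ → ℝ^{p×n} be differentiable with θ̃' = −k_θΓ𝒢θ̃ − k_θΓQ. Then V(t) ≜ ½( α²‖p̃(t)‖² + ‖r(t)‖² + ‖η(t)‖² + tr(θ̃(t)ᵀΓ(t)⁻¹θ̃(t)) ) is differentiable with V'(t) = −α³‖p̃(t)‖² − k‖r(t)‖² − (β − α)‖η(t)‖² − ½ tr( θ̃(t)ᵀ( k_θ𝒢 + β₁Γ(t)⁻¹ )θ̃(t) ) + ⟨r(t), φ(t)⟩ − k_θ tr( θ̃(t)ᵀ Q ) for all t. -/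

import Mathlib

open Matrix
attribute [local instance] Matrix.normedAddCommGroup Matrix.normedSpace

lemma entryD {a b : ℕ} {t : ℝ} {A : ℝ → Matrix (Fin a) (Fin b) ℝ} {A' : Matrix (Fin a) (Fin b) ℝ}
    (h : HasDerivAt A A' t) (i : Fin a) (j : Fin b) :
    HasDerivAt (fun s => A s i j) (A' i j) t :=
  hasDerivAt_pi.1 (hasDerivAt_pi.1 h i) j

lemma ofEntryD {a b : ℕ} {t : ℝ} {A : ℝ → Matrix (Fin a) (Fin b) ℝ} {A' : Matrix (Fin a) (Fin b) ℝ}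
    (h : ∀ i j, HasDerivAt (fun s => A s i j) (A' i j) t) :
    HasDerivAt A A' t :=
  hasDerivAt_pi.2 fun i => hasDerivAt_pi.2 fun j => h i j

lemma mulD {a b c : ℕ} {t : ℝ} {A : ℝ → Matrix (Fin a) (Fin b) ℝ} {A'}
    {B : ℝ → Matrix (Fin b) (Fin c) ℝ} {B'}
    (hA : HasDerivAt A A' t) (hB : HasDerivAt B B' t) :
    HasDerivAt (fun s => A s * B s) (A' * B t + A t * B') t := by
  apply ofEntryD
  intro i j
  have : ∀ s, (A s * B s) i j = ∑ l, A s i l * B s l j := fun s => Matrix.mul_apply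
  simp only [this]
  have h := HasDerivAt.fun_sum (u := Finset.univ)
    (A := fun l s => A s i l * B s l j)
    (A' := fun l => A' i l * B t l j + A t i l * B' l j)
    (fun l _ => (entryD hA i l).mul (entryD hB l j))
  convert h using 1
  · rfl
  · rfl
  simp [Matrix.add_apply, Matrix.mul_apply, Finset.sum_add_distrib]

lemma traceD {a : ℕ} {t : ℝ} {M : ℝ → Matrix (Fin a) (Fin a) ℝ} {M'}
    (h : HasDerivAt M M' t) :
    HasDerivAt (fun s => (M s).trace) M'.trace t := by
  have : ∀ N : Matrix (Fin a) (Fin a) ℝ, N.trace = ∑ i, N i i := fun N => rfl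
  simp only [this]
  exact HasDerivAt.fun_sum fun i _ => entryD h i i

lemma transD {a b : ℕ} {t : ℝ} {A : ℝ → Matrix (Fin a) (Fin b) ℝ} {A'}
    (h : HasDerivAt A A' t) :
    HasDerivAt (fun s => (A s)ᵀ) A'ᵀ t :=
  ofEntryD fun i j => entryD h j i

lemma detDiffAt {a : ℕ} {t : ℝ} {M : ℝ → Matrix (Fin a) (Fin a) ℝ}
    (h : ∀ i j, DifferentiableAt ℝ (fun s => M s i j) t) :
    DifferentiableAt ℝ (fun s => (M s).det) t := by
  simp only [Matrix.det_apply']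
  apply DifferentiableAt.fun_sum
  intro σ _
  exact (DifferentiableAt.fun_finsetProd (u := Finset.univ)
    (f := fun i s => M s (σ i) i) (fun i _ => h (σ i) i)).const_mul _

lemma invDiffAt {a : ℕ} {t : ℝ} {Γ : ℝ → Matrix (Fin a) (Fin a) ℝ} {Γ' : Matrix (Fin a) (Fin a) ℝ}
    (hΓ : HasDerivAt Γ Γ' t) (hu : IsUnit (Γ t)) :
    DifferentiableAt ℝ (fun s => (Γ s)⁻¹) t := by
  have hd : ∀ i j, DifferentiableAt ℝ (fun s => Γ s i j) t :=
    fun i j => (entryD hΓ i j).differentiableAt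
  have hdet : DifferentiableAt ℝ (fun s => (Γ s).det) t := detDiffAt hd
  have hne : (Γ t).det ≠ 0 :=
    ((Matrix.isUnit_iff_isUnit_det _).1 hu).ne_zero
  have hadj : DifferentiableAt ℝ (fun s => (Γ s).adjugate) t := by
    refine differentiableAt_pi.2 ?_
    intro i
    rw [differentiableAt_pi]
    intro j
    simp only [Matrix.adjugate_apply]
    apply detDiffAt
    intro l m
    simp only [Matrix.updateRow_apply]
    by_cases hl : l = j
    · simp [hl]
    · simp only [hl, if_false]
      exact hd l m
  have heq : (fun s => (Γ s)⁻¹) = fun s => ((Γ s).det)⁻¹ • (Γ s).adjugate := by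
    funext s
    rw [Matrix.inv_def, Ring.inverse_eq_inv']
  rw [heq]
  exact (hdet.inv hne).smul hadj

lemma invD {a : ℕ} {t : ℝ} (β₁ kθ : ℝ) (𝒢 : Matrix (Fin a) (Fin a) ℝ)
    {Γ : ℝ → Matrix (Fin a) (Fin a) ℝ}
    (hu : ∀ s, IsUnit (Γ s))
    (hΓ' : HasDerivAt Γ (β₁ • Γ t - kθ • (Γ t * 𝒢 * Γ t)) t) :
    HasDerivAt (fun s => (Γ s)⁻¹) (kθ • 𝒢 - β₁ • (Γ t)⁻¹) t := by
  set P := (Γ t)⁻¹ with hP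
  have hdet : ∀ s, IsUnit (Γ s).det := fun s => (Matrix.isUnit_iff_isUnit_det _).1 (hu s)
  have hGP : Γ t * P = 1 := Matrix.mul_nonsing_inv _ (hdet t)
  have hPG : P * Γ t = 1 := Matrix.nonsing_inv_mul _ (hdet t)
  have hPGX : ∀ X : Matrix (Fin a) (Fin a) ℝ, P * (Γ t * X) = X := by
    intro X; rw [← Matrix.mul_assoc, hPG, Matrix.one_mul]
  have hdiff : DifferentiableAt ℝ (fun s => (Γ s)⁻¹) t := invDiffAt hΓ' (hu t)
  set D0 := deriv (fun s => (Γ s)⁻¹) t with hD0def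
  have hD0 : HasDerivAt (fun s => (Γ s)⁻¹) D0 t := hdiff.hasDerivAt
  have hconst : HasDerivAt (fun s => Γ s * (Γ s)⁻¹) 0 t := by
    have : (fun s => Γ s * (Γ s)⁻¹) = fun _ => (1 : Matrix (Fin a) (Fin a) ℝ) :=
      funext fun s => Matrix.mul_nonsing_inv _ (hdet s)
    rw [this]
    exact hasDerivAt_const _ _
  have heq := (mulD hΓ' hD0).unique hconst
  have h2 : Γ t * D0 = -((β₁ • Γ t - kθ • (Γ t * 𝒢 * Γ t)) * P) :=
    eq_neg_of_add_eq_zero_right heq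
  have h3 : D0 = kθ • 𝒢 - β₁ • P := by
    calc D0 = P * (Γ t * D0) := (hPGX D0).symm
      _ = P * -((β₁ • Γ t - kθ • (Γ t * 𝒢 * Γ t)) * P) := by rw [h2]
      _ = kθ • 𝒢 - β₁ • P := by
          simp only [Matrix.mul_neg, Matrix.sub_mul, Matrix.mul_sub, smul_mul_assoc,
            mul_smul_comm, Matrix.mul_assoc, hGP, Matrix.mul_one, hPG, hPGX, neg_sub]
  rw [← h3]
  exact hD0

theorem stmt_12 (n d : ℕ) (α β k β₁ kθ : ℝ)
    (hα : 0 < α) (hβ : 0 < β) (hk : 0 < k) (hβ₁ : 0 < β₁) (hkθ : 0 < kθ)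
    (𝒢 : Matrix (Fin d) (Fin d) ℝ) (h𝒢sym : 𝒢.IsSymm) (Q : Matrix (Fin d) (Fin n) ℝ)
    (ptil r η φ : ℝ → EuclideanSpace ℝ (Fin n)) (hφ : Continuous φ)
    (hptil : ∀ t, HasDerivAt ptil (r t - α • ptil t - η t) t)
    (hη : ∀ t, HasDerivAt η
      (-(β • η t) - k • r t - α • (r t - α • ptil t - η t)) t)
    (hr : ∀ t, HasDerivAt r
      (-(k • r t) + φ t - (α ^ 2) • ptil t + (k + α) • η t) t)
    (Γ : ℝ → Matrix (Fin d) (Fin d) ℝ)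
    (hΓsym : ∀ t, (Γ t).IsSymm) (hΓunit : ∀ t, IsUnit (Γ t))
    (hΓ' : ∀ t, HasDerivAt Γ (β₁ • Γ t - kθ • (Γ t * 𝒢 * Γ t)) t)
    (θtil : ℝ → Matrix (Fin d) (Fin n) ℝ)
    (hθtil' : ∀ t, HasDerivAt θtil (-(kθ • (Γ t * 𝒢 * θtil t)) - kθ • (Γ t * Q)) t)
    (t : ℝ) :
    HasDerivAt (fun s => (1 / 2) * (α ^ 2 * ‖ptil s‖ ^ 2 + ‖r s‖ ^ 2 + ‖η s‖ ^ 2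
        + ((θtil s)ᵀ * (Γ s)⁻¹ * θtil s).trace))
      (-(α ^ 3 * ‖ptil t‖ ^ 2) - k * ‖r t‖ ^ 2 - (β - α) * ‖η t‖ ^ 2
        - (1 / 2) * ((θtil t)ᵀ * (kθ • 𝒢 + β₁ • (Γ t)⁻¹) * θtil t).trace
        + inner ℝ (r t) (φ t) - kθ * ((θtil t)ᵀ * Q).trace) t := by
  -- abbreviations
  set P := (Γ t)⁻¹ with hPdef
  set Θ := θtil t with hΘdef
  set Θ' := -(kθ • (Γ t * 𝒢 * Θ)) - kθ • (Γ t * Q) with hΘ'def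
  set P' := kθ • 𝒢 - β₁ • P with hP'def
  -- norm-squared derivatives
  have sq : ∀ (f : ℝ → EuclideanSpace ℝ (Fin n)) (f' : EuclideanSpace ℝ (Fin n)),
      HasDerivAt f f' t → HasDerivAt (fun s => ‖f s‖ ^ 2)
        ((inner ℝ (f t) f' : ℝ) + inner ℝ f' (f t)) t := by
    intro f f' hf
    have h := hf.inner ℝ hf
    simpa only [real_inner_self_eq_norm_sq] using h
  have hp2 := sq ptil _ (hptil t)
  have hr2 := sq r _ (hr t)
  have hη2 := sq η _ (hη t)
  -- trace derivative
  have hInv : HasDerivAt (fun s => (Γ s)⁻¹) P' t := invD β₁ kθ 𝒢 hΓunit (hΓ' t)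
  have hθ := hθtil' t
  have hTrans : HasDerivAt (fun s => (θtil s)ᵀ) Θ'ᵀ t := transD hθ
  have hMul1 : HasDerivAt (fun s => (θtil s)ᵀ * (Γ s)⁻¹) (Θ'ᵀ * P + Θᵀ * P') t :=
    mulD hTrans hInv
  have hMul2 : HasDerivAt (fun s => (θtil s)ᵀ * (Γ s)⁻¹ * θtil s)
      ((Θ'ᵀ * P + Θᵀ * P') * Θ + Θᵀ * P * Θ') t := mulD hMul1 hθ
  have hTr : HasDerivAt (fun s => ((θtil s)ᵀ * (Γ s)⁻¹ * θtil s).trace)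
      ((Θ'ᵀ * P + Θᵀ * P') * Θ + Θᵀ * P * Θ').trace t := traceD hMul2
  -- assemble
  have hV := ((((hp2.const_mul (α ^ 2)).add hr2).add hη2).add hTr).const_mul (1 / 2)
  -- identities for the trace part
  have hdet : IsUnit (Γ t).det := (Matrix.isUnit_iff_isUnit_det _).1 (hΓunit t)
  have hGP : Γ t * P = 1 := Matrix.mul_nonsing_inv _ hdet
  have hPG : P * Γ t = 1 := Matrix.nonsing_inv_mul _ hdet
  have hGs : (Γ t)ᵀ = Γ t := hΓsym t
  have h𝒢s : 𝒢ᵀ = 𝒢 := h𝒢sym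
  have hPGX : ∀ (X : Matrix (Fin d) (Fin n) ℝ), P * (Γ t * X) = X := by
    intro X; rw [← Matrix.mul_assoc, hPG, Matrix.one_mul]
  have hGPX : ∀ (X : Matrix (Fin d) (Fin n) ℝ), Γ t * (P * X) = X := by
    intro X; rw [← Matrix.mul_assoc, hGP, Matrix.one_mul]
  have htr_eq : ((Θ'ᵀ * P + Θᵀ * P') * Θ + Θᵀ * P * Θ').trace
      = -((Θᵀ * (kθ • 𝒢 + β₁ • P) * Θ).trace) - (2 * kθ) * ((Θᵀ * Q).trace) := by
    have hQΘ : (Qᵀ * Θ).trace = (Θᵀ * Q).trace := by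
      rw [← Matrix.trace_transpose (Qᵀ * Θ), Matrix.transpose_mul, Matrix.transpose_transpose]
    simp only [hΘ'def, hP'def, Matrix.transpose_sub, Matrix.transpose_neg,
      Matrix.transpose_smul, Matrix.transpose_mul, h𝒢s, hGs,
      Matrix.add_mul, Matrix.mul_add, Matrix.sub_mul, Matrix.mul_sub,
      Matrix.neg_mul, Matrix.mul_neg, smul_mul_assoc, mul_smul_comm,
      Matrix.mul_assoc, hGP, hPG, hPGX, Matrix.mul_one, Matrix.one_mul,
      Matrix.trace_add, Matrix.trace_sub, Matrix.trace_neg, Matrix.trace_smul,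
      smul_eq_mul, hQΘ]
    simp only [Matrix.smul_mul, Matrix.mul_smul, Matrix.mul_assoc, hGP, hPG, hPGX, hGPX,
      Matrix.mul_one, Matrix.one_mul, Matrix.trace_smul, Matrix.trace_neg, smul_eq_mul, hQΘ]
    ring
  -- final equality of derivatives
  convert hV using 1
  · rfl
  · rfl
  · rfl
  rw [htr_eq]
  simp only [inner_add_left, inner_add_right, inner_sub_left, inner_sub_right,
    inner_neg_left, inner_neg_right, real_inner_smul_left, real_inner_smul_right,
    real_inner_self_eq_norm_sq,
    real_inner_comm (ptil t) (r t), real_inner_comm (ptil t) (η t),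
    real_inner_comm (r t) (η t), real_inner_comm (φ t) (r t)]
  ring
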